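/- For 0 < m < 1, the matrix q(ξ) = (2μ|ξ|)^{-1/2}·(E - (1 - √(1-m))·diag(L(ξ),1)) satisfies q(ξ)² = (1/(2μ|ξ|))·(E - m·diag(L(ξ),1)); i.e. q(ξ) is a square root of the single layer principal symbol. -/

import Mathlib

open Matrix

/-- The matrix `q(ξ) = (2μ|ξ|)^{-1/2}(E - (1-√(1-m))·diag(L(ξ),1))` is a square
root of the single layer principal symbol `(1/(2μ|ξ|))(E - m·diag(L(ξ),1))`. -/
theorem stmt_12 (mu m ξ₁ ξ₂ : ℝ) (hmu : 0 < mu) (hm0 : 0 < m) (hm1 : m < 1)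
    (hξ : (ξ₁, ξ₂) ≠ (0, 0)) :
    let r : ℝ := Real.sqrt (ξ₁ ^ 2 + ξ₂ ^ 2)
    let D : Matrix (Fin 3) (Fin 3) ℝ :=
      !![ξ₁ ^ 2 / (ξ₁ ^ 2 + ξ₂ ^ 2), ξ₁ * ξ₂ / (ξ₁ ^ 2 + ξ₂ ^ 2), 0;
         ξ₁ * ξ₂ / (ξ₁ ^ 2 + ξ₂ ^ 2), ξ₂ ^ 2 / (ξ₁ ^ 2 + ξ₂ ^ 2), 0;
         0, 0, 1]
    let q : Matrix (Fin 3) (Fin 3) ℝ :=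
      (2 * mu * r) ^ (-(1 : ℝ) / 2) • (1 - (1 - Real.sqrt (1 - m)) • D)
    q * q = (1 / (2 * mu * r)) • (1 - m • D) := by
  intro r D q
  have hsq : ξ₁ ^ 2 + ξ₂ ^ 2 > 0 := by
    have h1 : ξ₁ ≠ 0 ∨ ξ₂ ≠ 0 := by
      by_contra hc
      push_neg at hc
      exact hξ (by simp [hc.1, hc.2])
    rcases h1 with h1 | h1 <;> positivity
  have hr : 0 < r := Real.sqrt_pos.mpr hsq
  have hx : (0:ℝ) < 2 * mu * r := by positivity
  -- D is idempotent
  have hD : D * D = D := by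
    ext i j
    fin_cases i <;> fin_cases j <;>
      simp [D, Matrix.mul_apply, Fin.sum_univ_three] <;>
      field_simp <;> ring
  -- scalar facts
  set s : ℝ := Real.sqrt (1 - m) with hs
  have hs2 : s ^ 2 = 1 - m := Real.sq_sqrt (by linarith)
  have hc2 : ((2 * mu * r) ^ (-(1 : ℝ) / 2)) ^ 2 = 1 / (2 * mu * r) := by
    rw [← Real.rpow_natCast ((2 * mu * r) ^ (-(1 : ℝ) / 2)) 2,
      ← Real.rpow_mul hx.le]
    norm_num
    rw [Real.rpow_neg_one]
    field_simp
  have hM : (1 - (1 - s) • D) * (1 - (1 - s) • D) = 1 - m • D := by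
    have expand : (1 - (1 - s) • D) * (1 - (1 - s) • D)
        = 1 - (2 * (1 - s)) • D + ((1 - s) ^ 2) • (D * D) := by
      simp only [sub_mul, mul_sub, one_mul, mul_one, Matrix.smul_mul,
        Matrix.mul_smul, smul_smul]
      module
    rw [expand, hD]
    have : (2 * (1 - s)) • D - ((1 - s) ^ 2) • D = m • D := by
      rw [← sub_smul]
      congr 1
      nlinarith [hs2]
    rw [← this]
    abel
  calc q * q = (((2 * mu * r) ^ (-(1 : ℝ) / 2)) ^ 2) •
      ((1 - (1 - s) • D) * (1 - (1 - s) • D)) := by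
        simp [q, Matrix.smul_mul, Matrix.mul_smul, smul_smul, sq, hs]
    _ = (1 / (2 * mu * r)) • (1 - m • D) := by rw [hc2, hM]
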